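/- Let G be a finite group, n m : ℕ, and let the tuple of relators r : Fin m → FreeGroup (Fin n) be a presentation P of G. Then the cardinality of the automorphism group of G equals the cardinality of S_P, i.e., Nat.card (MulAut G) = Nat.card {a : Fin n → G | a is a presentation n-tuple of P}. -/
import Mathlib


/-- `|Aut(G)| = |S_P|` for every finite-rank presentation `P` of a finite
group `G`. -/
theorem stmt_1 {G : Type*} [Group G] [Finite G] {n m : ℕ}
    (r : Fin m → FreeGroup (Fin n))
    (hP : ∃ f : FreeGroup (Fin n) →* G, Function.Surjective f ∧
      f.ker = Subgroup.normalClosure (Set.range r)) :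
    Nat.card (MulAut G) =
      Nat.card {a : Fin n → G //
        Function.Surjective (FreeGroup.lift a) ∧ ∀ k, FreeGroup.lift a (r k) = 1} := by
  obtain ⟨f, hfs, hker⟩ := hP
  set a₀ : Fin n → G := fun j => f (FreeGroup.of j) with ha₀
  have hrk : ∀ k, f (r k) = 1 := by
    intro k
    have : r k ∈ f.ker := by
      rw [hker]; exact Subgroup.subset_normalClosure ⟨k, rfl⟩
    simpa [MonoidHom.mem_ker] using this
  have hfinv : Function.RightInverse (Function.surjInv hfs) f :=
    Function.rightInverse_surjInv hfs
  have hcomp : ∀ φ : MulAut G,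
      FreeGroup.lift (fun j => φ (a₀ j)) = φ.toMonoidHom.comp f := by
    intro φ
    apply FreeGroup.ext_hom
    intro j
    simp [ha₀]
  refine Nat.card_eq_of_bijective
    (fun φ : MulAut G =>
      (⟨fun j => φ (a₀ j), by
        constructor
        · rw [hcomp]; exact φ.surjective.comp hfs
        · intro k; rw [hcomp]; simp [hrk k]⟩ :
        {a : Fin n → G // Function.Surjective (FreeGroup.lift a) ∧
          ∀ k, FreeGroup.lift a (r k) = 1})) ⟨?_, ?_⟩
  · intro φ ψ h
    have h' : (fun j => φ (a₀ j)) = fun j => ψ (a₀ j) :=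
      congrArg Subtype.val h
    have : φ.toMonoidHom.comp f = ψ.toMonoidHom.comp f := by
      rw [← hcomp φ, ← hcomp ψ, h']
    have h2 : φ.toMonoidHom = ψ.toMonoidHom := (MonoidHom.cancel_right hfs).mp this
    ext g
    exact DFunLike.congr_fun h2 g
  · rintro ⟨a, hs, hr⟩
    have hle : f.ker ≤ (FreeGroup.lift a).ker := by
      rw [hker]
      apply Subgroup.normalClosure_le_normal
      rintro x ⟨k, rfl⟩
      simpa [MonoidHom.mem_ker] using hr k
    set ψ : G →* G := f.liftOfRightInverse (Function.surjInv hfs) hfinv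
      ⟨FreeGroup.lift a, hle⟩ with hψ
    have hψf : ∀ w, ψ (f w) = FreeGroup.lift a w := fun w =>
      f.liftOfRightInverse_comp_apply (Function.surjInv hfs) hfinv ⟨FreeGroup.lift a, hle⟩ w
    have hψs : Function.Surjective ψ := by
      intro g
      obtain ⟨w, rfl⟩ := hs g
      exact ⟨f w, hψf w⟩
    have hψi : Function.Injective ψ := Finite.injective_iff_surjective.mpr hψs
    refine ⟨MulEquiv.ofBijective ψ ⟨hψi, hψs⟩, ?_⟩
    apply Subtype.ext
    funext j
    show ψ (a₀ j) = a j
    simp [ha₀, hψf (FreeGroup.of j)]
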